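/- Exchangeability from the Pólya urn: the sequence $(X_i)$ generated by the generalized Pólya urn scheme with precision $\alpha > 0$ and base distribution $G_0$ is exchangeable; i.e., for every $n$ and every permutation $\pi$ of $\{1,\dots,n\}$, $(X_1,\dots,X_n) \stackrel{d}{=} (X_{\pi(1)},\dots,X_{\pi(n)})$. -/

import Mathlib

open MeasureTheory ProbabilityTheory

/-- One predictive step of the generalized Pólya urn (Blackwell–MacQueen) scheme:
given previous values `x`, the next value is drawn from
`α/(α+n) • G0 + 1/(α+n) • ∑ δ_{x i}`. -/
noncomputable def polyaStep (α : ℝ) (G0 : MeasureTheory.Measure ℝ) {n : ℕ} (x : Fin n → ℝ) :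
    MeasureTheory.Measure ℝ :=
  ENNReal.ofReal (α / (α + n)) • G0
    + ENNReal.ofReal (1 / (α + n)) • ∑ i : Fin n, MeasureTheory.Measure.dirac (x i)

/-- Joint law of the first `n` draws of the generalized Pólya urn scheme. -/
noncomputable def polyaLaw (α : ℝ) (G0 : MeasureTheory.Measure ℝ) :
    (n : ℕ) → MeasureTheory.Measure (Fin n → ℝ)
  | 0 => MeasureTheory.Measure.dirac Fin.elim0
  | n + 1 => (polyaLaw α G0 n).bind (fun x => (polyaStep α G0 x).map (Fin.snoc x))




namespace PolyaAux

variable {A B C : Type*} [MeasurableSpace A] [MeasurableSpace B] [MeasurableSpace C]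

lemma measurable_measure_add {κ₁ κ₂ : A → Measure B} (h1 : Measurable κ₁)
    (h2 : Measurable κ₂) : Measurable fun a => κ₁ a + κ₂ a :=
  Measure.measurable_of_measurable_coe _ fun s hs => by
    simp only [Measure.add_apply]
    exact ((Measure.measurable_coe hs).comp h1).add ((Measure.measurable_coe hs).comp h2)

lemma measurable_measure_smul (c : ENNReal) {κ : A → Measure B} (h : Measurable κ) :
    Measurable fun a => c • κ a :=
  Measure.measurable_of_measurable_coe _ fun s hs => by
    simp only [Measure.smul_apply, smul_eq_mul]
    exact ((Measure.measurable_coe hs).comp h).const_mul c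

lemma measurable_measure_sum {ι : Type*} (I : Finset ι) {κ : ι → A → Measure B}
    (h : ∀ i, Measurable (κ i)) : Measurable fun a => ∑ i ∈ I, κ i a :=
  Measure.measurable_of_measurable_coe _ fun s hs => by
    simp only [Measure.finset_sum_apply]
    exact Finset.measurable_sum _ fun i _ => (Measure.measurable_coe hs).comp (h i)

lemma measurable_map_param (ν : Measure B) [SFinite ν] {F : A × B → C} (hF : Measurable F) :
    Measurable fun a => ν.map (fun b => F (a, b)) :=
  Measure.measurable_of_measurable_coe _ fun s hs => by
    have : ∀ a, ν.map (fun b => F (a, b)) s = ν (Prod.mk a ⁻¹' (F ⁻¹' s)) := fun a => by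
      rw [Measure.map_apply (f := fun b => F (a, b))
        (by exact hF.comp measurable_prodMk_left) hs]; rfl
    simp only [this]
    exact measurable_measure_prodMk_left (hF hs)

variable {μ ν : Measure A} {κ κ₁ κ₂ : A → Measure B}

lemma bind_add_measure (hκ : Measurable κ) : (μ + ν).bind κ = μ.bind κ + ν.bind κ := by
  ext s hs
  simp [Measure.bind_apply hs hκ.aemeasurable, lintegral_add_measure]

lemma bind_smul_measure (c : ENNReal) (hκ : Measurable κ) :
    (c • μ).bind κ = c • μ.bind κ := by
  ext s hs
  simp [Measure.bind_apply hs hκ.aemeasurable, lintegral_smul_measure]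

lemma bind_kernel_add (h1 : Measurable κ₁) (h2 : Measurable κ₂) :
    μ.bind (fun a => κ₁ a + κ₂ a) = μ.bind κ₁ + μ.bind κ₂ := by
  ext s hs
  rw [Measure.bind_apply hs (measurable_measure_add h1 h2).aemeasurable]
  simp only [Measure.add_apply, Measure.bind_apply hs h1.aemeasurable, Measure.bind_apply hs h2.aemeasurable]
  exact lintegral_add_left ((Measure.measurable_coe hs).comp h1) _

lemma bind_kernel_smul (c : ENNReal) (h : Measurable κ) :
    μ.bind (fun a => c • κ a) = c • μ.bind κ := by
  ext s hs
  rw [Measure.bind_apply hs (measurable_measure_smul c h).aemeasurable, Measure.smul_apply,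
    Measure.bind_apply hs h.aemeasurable, smul_eq_mul,
    ← lintegral_const_mul c (by exact (Measure.measurable_coe hs).comp h)]
  simp

lemma map_bind {f : B → C} (hκ : Measurable κ) (hf : Measurable f) :
    (μ.bind κ).map f = μ.bind (fun a => (κ a).map f) := by
  ext s hs
  rw [Measure.map_apply hf hs, Measure.bind_apply (hf hs) hκ.aemeasurable,
    Measure.bind_apply (f := fun a => (κ a).map f) hs
      (by exact Measurable.aemeasurable ((Measure.measurable_map f hf).comp hκ))]
  congr 1
  ext a
  rw [Measure.map_apply hf hs]

lemma bind_map {g : C → A} (hg : Measurable g) (hκ : Measurable κ) {ρ : Measure C} :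
    (ρ.map g).bind κ = ρ.bind (fun c => κ (g c)) := by
  ext s hs
  rw [Measure.bind_apply hs hκ.aemeasurable,
    lintegral_map (by exact (Measure.measurable_coe hs).comp hκ) hg,
    Measure.bind_apply (f := fun c => κ (g c)) hs (by exact Measurable.aemeasurable (hκ.comp hg))]

lemma prod_eq_bind (μ : Measure A) (ν : Measure B) [SFinite ν] :
    μ.bind (fun a => ν.map (Prod.mk a)) = μ.prod ν := by
  ext s hs
  rw [Measure.bind_apply (f := fun a => ν.map (Prod.mk a)) hs
    (by exact Measurable.aemeasurable (measurable_map_param ν measurable_id)), Measure.prod_apply hs]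
  congr 1
  ext a
  rw [Measure.map_apply measurable_prodMk_left hs]

end PolyaAux

namespace PolyaAux

lemma map_finset_sum {A B : Type*} [MeasurableSpace A] [MeasurableSpace B]
    {ι : Type*} (I : Finset ι) (μ : ι → Measure A) {f : A → B} (hf : Measurable f) :
    (∑ i ∈ I, μ i).map f = ∑ i ∈ I, (μ i).map f := by
  ext s hs
  simp [Measure.map_apply hf hs, Measure.finset_sum_apply]

lemma isFiniteMeasure_finset_sum {A : Type*} [MeasurableSpace A] {ι : Type*} (I : Finset ι)
    (μ : ι → Measure A) [∀ i, IsFiniteMeasure (μ i)] : IsFiniteMeasure (∑ i ∈ I, μ i) := by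
  constructor
  rw [Measure.finset_sum_apply]
  exact ENNReal.sum_lt_top.2 fun i _ => measure_lt_top _ _

variable {n : ℕ}

lemma measurable_comp_perm (π : Equiv.Perm (Fin n)) :
    Measurable fun v : Fin n → ℝ => v ∘ π :=
  measurable_pi_lambda _ fun i => measurable_pi_apply _

lemma measurable_snoc_joint :
    Measurable fun q : (Fin n → ℝ) × ℝ => (Fin.snoc q.1 q.2 : Fin (n + 1) → ℝ) := by
  apply measurable_pi_lambda
  intro i
  cases i using Fin.lastCases with
  | last => simpa [Fin.snoc_last] using measurable_snd
  | cast j => simpa [Fin.snoc_castSucc, Function.comp_def] using (measurable_pi_apply j).comp measurable_fst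

lemma measurable_snoc_right (x : Fin n → ℝ) :
    Measurable fun y : ℝ => (Fin.snoc x y : Fin (n + 1) → ℝ) :=
  measurable_snoc_joint.comp (measurable_const.prodMk measurable_id)

variable (α : ℝ) (G0 : Measure ℝ) [IsProbabilityMeasure G0]

lemma polyaStep_comp_perm (x : Fin n → ℝ) (σ : Equiv.Perm (Fin n)) :
    polyaStep α G0 (x ∘ σ) = polyaStep α G0 x := by
  unfold polyaStep
  congr 2
  exact Equiv.sum_comp σ fun i => Measure.dirac (x i)

lemma measurable_polyaStep : Measurable (polyaStep α G0 (n := n)) := by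
  unfold polyaStep
  exact measurable_measure_add measurable_const
    (measurable_measure_smul _ (measurable_measure_sum _ fun i =>
      Measure.measurable_dirac.comp (measurable_pi_apply i)))

/-- The one-step transition kernel on path space. -/
noncomputable def K (x : Fin n → ℝ) : Measure (Fin (n + 1) → ℝ) :=
  (polyaStep α G0 x).map (Fin.snoc x)

lemma K_eq (x : Fin n → ℝ) :
    K α G0 x = ENNReal.ofReal (α / (α + n)) • G0.map (Fin.snoc x)
      + ENNReal.ofReal (1 / (α + n)) • ∑ i : Fin n, Measure.dirac (Fin.snoc x (x i)) := by
  unfold K polyaStep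
  rw [Measure.map_add _ _ (measurable_snoc_right x), Measure.map_smul, Measure.map_smul,
    map_finset_sum _ _ (measurable_snoc_right x)]
  congr 2
  refine Finset.sum_congr rfl fun i _ => ?_
  rw [Measure.map_dirac' (measurable_snoc_right x)]

lemma measurable_K : Measurable (K α G0 (n := n)) := by
  have : K α G0 (n := n) = fun x : Fin n → ℝ =>
      ENNReal.ofReal (α / (α + n)) • G0.map (Fin.snoc (α := fun _ => ℝ) x)
        + ENNReal.ofReal (1 / (α + n))
          • ∑ i : Fin n, Measure.dirac (Fin.snoc (α := fun _ => ℝ) x (x i)) := by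
    funext x; exact K_eq α G0 x
  rw [this]
  refine measurable_measure_add
    (measurable_measure_smul _ (measurable_map_param G0 measurable_snoc_joint))
    (measurable_measure_smul _ (measurable_measure_sum _ fun i => ?_))
  exact Measure.measurable_dirac.comp
    (measurable_snoc_joint.comp (measurable_id.prodMk (measurable_pi_apply i)))

lemma polyaLaw_succ : polyaLaw α G0 (n + 1) = (polyaLaw α G0 n).bind (K α G0) := rfl

end PolyaAux

namespace PolyaAux

variable {n : ℕ}

/-- Extend a permutation of `Fin n` to `Fin (n+1)` fixing the last element. -/
def liftPerm (σ : Equiv.Perm (Fin n)) : Equiv.Perm (Fin (n + 1)) :=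
  finSuccEquivLast.symm.permCongr σ.optionCongr

@[simp] lemma liftPerm_castSucc (σ : Equiv.Perm (Fin n)) (i : Fin n) :
    liftPerm σ (Fin.castSucc i) = Fin.castSucc (σ i) := by
  simp [liftPerm, Equiv.permCongr_apply]

@[simp] lemma liftPerm_last (σ : Equiv.Perm (Fin n)) :
    liftPerm σ (Fin.last n) = Fin.last n := by
  simp [liftPerm, Equiv.permCongr_apply]

lemma snoc_comp_liftPerm (σ : Equiv.Perm (Fin n)) (x : Fin n → ℝ) (y : ℝ) :
    (Fin.snoc x y : Fin (n + 1) → ℝ) ∘ (liftPerm σ) = Fin.snoc (x ∘ σ) y := by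
  funext i
  cases i using Fin.lastCases with
  | last => simp
  | cast j => simp

lemma liftPerm_swap (a b : Fin n) :
    liftPerm (Equiv.swap a b) = Equiv.swap (Fin.castSucc a) (Fin.castSucc b) := by
  ext i
  cases i using Fin.lastCases with
  | last =>
    rw [liftPerm_last, Equiv.swap_apply_of_ne_of_ne (Fin.castSucc_lt_last a).ne'
      (Fin.castSucc_lt_last b).ne']
  | cast j =>
    rw [liftPerm_castSucc, (Fin.castSucc_injective n).swap_apply]

variable (α : ℝ) (G0 : Measure ℝ) [IsProbabilityMeasure G0]

lemma polyaLaw_map_liftPerm (σ : Equiv.Perm (Fin n))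
    (h : (polyaLaw α G0 n).map (fun x => x ∘ σ) = polyaLaw α G0 n) :
    (polyaLaw α G0 (n + 1)).map (fun x => x ∘ liftPerm σ) = polyaLaw α G0 (n + 1) := by
  rw [polyaLaw_succ, map_bind (measurable_K α G0) (measurable_comp_perm _)]
  have hpt : ∀ x : Fin n → ℝ,
      (K α G0 x).map (fun v => v ∘ liftPerm σ) = K α G0 (x ∘ σ) := by
    intro x
    unfold K
    rw [Measure.map_map (measurable_comp_perm _) (measurable_snoc_right x),
      polyaStep_comp_perm]
    congr 1
    funext y
    exact snoc_comp_liftPerm σ x y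
  calc (polyaLaw α G0 n).bind (fun x => (K α G0 x).map (fun v => v ∘ liftPerm σ))
      = (polyaLaw α G0 n).bind (fun x => K α G0 (x ∘ σ)) := by
        congr 1; funext x; exact hpt x
    _ = ((polyaLaw α G0 n).map (fun x => x ∘ σ)).bind (K α G0) :=
        (bind_map (measurable_comp_perm σ) (measurable_K α G0)).symm
    _ = (polyaLaw α G0 n).bind (K α G0) := by rw [h]
    _ = polyaLaw α G0 (n + 1) := (polyaLaw_succ α G0).symm

end PolyaAux

namespace PolyaAux

variable {n : ℕ} (α : ℝ) (G0 : Measure ℝ) [IsProbabilityMeasure G0]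

/-- Two consecutive draws, recorded as a measure on `ℝ × ℝ`. -/
noncomputable def T (x : Fin n → ℝ) : Measure (ℝ × ℝ) :=
  (polyaStep α G0 x).bind
    (fun y => (polyaStep α G0 (Fin.snoc x y)).map (fun z => (y, z)))

lemma step_snoc (x : Fin n → ℝ) (y : ℝ) :
    polyaStep α G0 (Fin.snoc x y) =
      ENNReal.ofReal (α / (α + (n + 1 : ℕ))) • G0
        + (ENNReal.ofReal (1 / (α + (n + 1 : ℕ))) • ∑ i : Fin n, Measure.dirac (x i)
          + ENNReal.ofReal (1 / (α + (n + 1 : ℕ))) • Measure.dirac y) := by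
  unfold polyaStep
  rw [Fin.sum_univ_castSucc]
  simp [smul_add]

lemma T_symm (hα : 0 < α) (x : Fin n → ℝ) : (T α G0 x).map Prod.swap = T α G0 x := by
  set S : Measure ℝ := ∑ i : Fin n, Measure.dirac (x i) with hSdef
  haveI : IsFiniteMeasure S := isFiniteMeasure_finset_sum _ _
  set a := ENNReal.ofReal (α / (α + n)) with ha
  set b := ENNReal.ofReal (1 / (α + n)) with hb
  set a' := ENNReal.ofReal (α / (α + (n + 1 : ℕ))) with ha'
  set b' := ENNReal.ofReal (1 / (α + (n + 1 : ℕ))) with hb'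
  have hpos : (0:ℝ) < α + n := by positivity
  have hpos' : (0:ℝ) < α + (n + 1 : ℕ) := by positivity
  have hd : Measurable (fun y : ℝ => (y, y)) := measurable_id.prodMk measurable_id
  -- the inner kernel
  have hker : ∀ y : ℝ, (polyaStep α G0 (Fin.snoc x y)).map (fun z => (y, z)) =
      a' • G0.map (Prod.mk y) + (b' • S.map (Prod.mk y) + b' • Measure.dirac (y, y)) := by
    intro y
    rw [step_snoc, ← hSdef, ← ha', ← hb',
      Measure.map_add _ _ (by exact measurable_prodMk_left),
      Measure.map_add _ _ (by exact measurable_prodMk_left),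
      Measure.map_smul, Measure.map_smul, Measure.map_smul,
      Measure.map_dirac' (by exact measurable_prodMk_left)]
  have hmG : Measurable fun y : ℝ => G0.map (Prod.mk y) := by
    exact measurable_map_param G0 measurable_id
  have hmS : Measurable fun y : ℝ => S.map (Prod.mk y) := by
    exact measurable_map_param S measurable_id
  have hmD : Measurable fun y : ℝ => Measure.dirac (y, y) :=
    Measure.measurable_dirac.comp hd
  have hκ : Measurable fun y : ℝ =>
      a' • G0.map (Prod.mk y) + (b' • S.map (Prod.mk y) + b' • Measure.dirac (y, y)) :=
    measurable_measure_add (measurable_measure_smul _ hmG)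
      (measurable_measure_add (measurable_measure_smul _ hmS)
        (measurable_measure_smul _ hmD))
  -- expansion of the bind of the kernel against an s-finite measure
  have hexp : ∀ (μ : Measure ℝ), SFinite μ → μ.bind (fun y =>
      a' • G0.map (Prod.mk y) + (b' • S.map (Prod.mk y) + b' • Measure.dirac (y, y))) =
      a' • μ.prod G0 + (b' • μ.prod S + b' • μ.map (fun y => (y, y))) := by
    intro μ _
    rw [bind_kernel_add (measurable_measure_smul _ hmG)
        (measurable_measure_add (measurable_measure_smul _ hmS)
          (measurable_measure_smul _ hmD)),
      bind_kernel_add (measurable_measure_smul _ hmS) (measurable_measure_smul _ hmD),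
      bind_kernel_smul _ hmG, bind_kernel_smul _ hmS, bind_kernel_smul _ hmD,
      prod_eq_bind, prod_eq_bind, Measure.bind_dirac_eq_map _ hd]
  -- expansion of T
  have hT : T α G0 x = a • (a' • G0.prod G0 + (b' • G0.prod S + b' • G0.map (fun y => (y, y))))
      + b • (a' • S.prod G0 + (b' • S.prod S + b' • S.map (fun y => (y, y)))) := by
    unfold T
    rw [show (polyaStep α G0 x) = a • G0 + b • S by rw [polyaStep, hSdef, ha, hb]]
    have : (fun y : ℝ => (polyaStep α G0 (Fin.snoc x y)).map (fun z => (y, z))) = fun y =>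
        a' • G0.map (Prod.mk y) + (b' • S.map (Prod.mk y) + b' • Measure.dirac (y, y)) := by
      funext y; exact hker y
    rw [this, bind_add_measure hκ, bind_smul_measure _ hκ, bind_smul_measure _ hκ,
      hexp G0 inferInstance, hexp S inferInstance]
  -- the key coefficient identity
  have hkey : a * b' = b * a' := by
    rw [ha, hb, ha', hb', ← ENNReal.ofReal_mul (by positivity),
      ← ENNReal.ofReal_mul (by positivity)]
    congr 1
    ring
  -- swap
  have hswapdiag : ∀ (μ : Measure ℝ), (μ.map (fun y => (y, y))).map Prod.swap
      = μ.map (fun y => (y, y)) := by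
    intro μ
    rw [Measure.map_map measurable_swap hd]
    rfl
  have hA : ∀ (μ ν : Measure (ℝ × ℝ)), (μ + ν).map Prod.swap
      = μ.map Prod.swap + ν.map Prod.swap := fun μ ν => Measure.map_add μ ν measurable_swap
  have hSm : ∀ (c : ENNReal) (μ : Measure (ℝ × ℝ)), (c • μ).map Prod.swap
      = c • μ.map Prod.swap := fun c μ => Measure.map_smul c μ _
  rw [hT]
  simp only [hA, hSm, Measure.prod_swap, hswapdiag]
  simp only [smul_add, smul_smul]
  rw [hkey]
  abel

end PolyaAux

namespace PolyaAux

variable {n k : ℕ} (α : ℝ) (G0 : Measure ℝ) [IsProbabilityMeasure G0]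

lemma Tker_eq (x : Fin n → ℝ) (y : ℝ) :
    (polyaStep α G0 (Fin.snoc x y)).map (fun z => (y, z)) =
      ENNReal.ofReal (α / (α + (n + 1 : ℕ))) • G0.map (Prod.mk y)
        + (ENNReal.ofReal (1 / (α + (n + 1 : ℕ)))
            • (∑ i : Fin n, Measure.dirac (x i)).map (Prod.mk y)
          + ENNReal.ofReal (1 / (α + (n + 1 : ℕ))) • Measure.dirac (y, y)) := by
  rw [step_snoc, Measure.map_add _ _ (by exact measurable_prodMk_left),
    Measure.map_add _ _ (by exact measurable_prodMk_left),
    Measure.map_smul, Measure.map_smul, Measure.map_smul,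
    Measure.map_dirac' (by exact measurable_prodMk_left)]

lemma measurable_Tker (x : Fin n → ℝ) :
    Measurable fun y : ℝ => (polyaStep α G0 (Fin.snoc x y)).map (fun z => (y, z)) := by
  haveI : IsFiniteMeasure (∑ i : Fin n, Measure.dirac (x i)) := isFiniteMeasure_finset_sum _ _
  have : (fun y : ℝ => (polyaStep α G0 (Fin.snoc x y)).map (fun z => (y, z))) = fun y =>
      ENNReal.ofReal (α / (α + (n + 1 : ℕ))) • G0.map (Prod.mk y)
        + (ENNReal.ofReal (1 / (α + (n + 1 : ℕ)))
            • (∑ i : Fin n, Measure.dirac (x i)).map (Prod.mk y)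
          + ENNReal.ofReal (1 / (α + (n + 1 : ℕ))) • Measure.dirac (y, y)) := by
    funext y; exact Tker_eq α G0 x y
  rw [this]
  exact measurable_measure_add
    (measurable_measure_smul _ (measurable_map_param G0 measurable_id))
    (measurable_measure_add
      (measurable_measure_smul _ (measurable_map_param _ measurable_id))
      (measurable_measure_smul _
        (Measure.measurable_dirac.comp (measurable_id.prodMk measurable_id))))

/-- The transposition of the last two elements of `Fin (k+2)`. -/
def swap2 (k : ℕ) : Equiv.Perm (Fin (k + 2)) :=
  Equiv.swap (Fin.castSucc (Fin.last k)) (Fin.last (k + 1))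

lemma snoc_snoc_comp_swap2 (x : Fin k → ℝ) (y z : ℝ) :
    (Fin.snoc (Fin.snoc x y) z : Fin (k + 2) → ℝ) ∘ (swap2 k)
      = Fin.snoc (Fin.snoc x z) y := by
  funext i
  unfold swap2
  cases i using Fin.lastCases with
  | last => simp [Equiv.swap_apply_right]
  | cast j =>
    cases j using Fin.lastCases with
    | last => simp [Equiv.swap_apply_left]
    | cast j' =>
      have h1 : Fin.castSucc (Fin.castSucc j') ≠ Fin.castSucc (Fin.last k) :=
        fun h => (Fin.castSucc_lt_last j').ne (Fin.castSucc_injective _ h)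
      have h2 : Fin.castSucc (Fin.castSucc j') ≠ Fin.last (k + 1) :=
        (Fin.castSucc_lt_last _).ne
      simp [Function.comp_apply, Equiv.swap_apply_of_ne_of_ne h1 h2]

lemma W_eq (x : Fin k → ℝ) :
    (K α G0 x).bind (K α G0) =
      (T α G0 x).map (fun p : ℝ × ℝ => (Fin.snoc (Fin.snoc x p.1) p.2 : Fin (k + 2) → ℝ)) := by
  have hGx : Measurable fun p : ℝ × ℝ => (Fin.snoc (Fin.snoc x p.1) p.2 : Fin (k + 2) → ℝ) :=
    measurable_snoc_joint.comp
      (((measurable_snoc_right x).comp measurable_fst).prodMk measurable_snd)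
  rw [show K α G0 x = (polyaStep α G0 x).map (Fin.snoc x) from rfl,
    bind_map (measurable_snoc_right x) (measurable_K α G0)]
  unfold T
  rw [map_bind (measurable_Tker α G0 x) hGx]
  congr 1
  funext y
  rw [Measure.map_map hGx (by exact measurable_prodMk_left)]
  rfl

lemma W_swap (hα : 0 < α) (x : Fin k → ℝ) :
    ((K α G0 x).bind (K α G0)).map (fun v => v ∘ swap2 k) = (K α G0 x).bind (K α G0) := by
  have hGx : Measurable fun p : ℝ × ℝ => (Fin.snoc (Fin.snoc x p.1) p.2 : Fin (k + 2) → ℝ) :=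
    measurable_snoc_joint.comp
      (((measurable_snoc_right x).comp measurable_fst).prodMk measurable_snd)
  rw [W_eq, Measure.map_map (measurable_comp_perm (swap2 k)) hGx]
  have hcomp : ((fun v : Fin (k + 2) → ℝ => v ∘ swap2 k)
      ∘ fun p : ℝ × ℝ => (Fin.snoc (Fin.snoc x p.1) p.2 : Fin (k + 2) → ℝ))
      = (fun p : ℝ × ℝ => (Fin.snoc (Fin.snoc x p.1) p.2 : Fin (k + 2) → ℝ)) ∘ Prod.swap := by
    funext p
    exact snoc_snoc_comp_swap2 x p.1 p.2
  rw [hcomp, ← Measure.map_map hGx measurable_swap, T_symm α G0 hα x, ← W_eq]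

lemma polyaLaw_map_swap2 (hα : 0 < α) :
    (polyaLaw α G0 (k + 2)).map (fun v => v ∘ swap2 k) = polyaLaw α G0 (k + 2) := by
  rw [polyaLaw_succ, polyaLaw_succ,
    Measure.bind_bind (measurable_K α G0).aemeasurable (measurable_K α G0).aemeasurable,
    map_bind (κ := fun a => (K α G0 a).bind (K α G0))
      (by exact (Measure.measurable_bind' (measurable_K α G0)).comp (measurable_K α G0))
      (measurable_comp_perm _)]
  congr 1
  funext x
  exact W_swap α G0 hα x

end PolyaAux

/-- exchangeability of the Pólya urn sequence. For every `n` and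
every permutation `π` of `{1,…,n}`, `(X_{π(1)},…,X_{π(n)})` has the same law
as `(X_1,…,X_n)`. -/
theorem polya_exchangeable
    (α : ℝ) (hα : 0 < α) (G0 : Measure ℝ) [IsProbabilityMeasure G0]
    (n : ℕ) (π : Equiv.Perm (Fin n)) :
    (polyaLaw α G0 n).map (fun x => x ∘ π) = polyaLaw α G0 n := by
  open PolyaAux in
  induction n with
  | zero =>
    have : (fun x : Fin 0 → ℝ => x ∘ π) = id := funext fun x => funext fun i => i.elim0
    rw [this, Measure.map_id]
  | succ n IH =>
    set L := polyaLaw α G0 (n + 1) with hL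
    -- the set of "good" permutations is closed under multiplication
    have hmul : ∀ σ τ : Equiv.Perm (Fin (n + 1)),
        L.map (fun x => x ∘ σ) = L → L.map (fun x => x ∘ τ) = L →
        L.map (fun x => x ∘ (σ * τ)) = L := by
      intro σ τ hσ hτ
      have hco : (fun x : Fin (n + 1) → ℝ => x ∘ (σ * τ))
          = (fun x : Fin (n + 1) → ℝ => x ∘ τ) ∘ (fun x => x ∘ σ) := funext fun x => rfl
      rw [hco, ← Measure.map_map (measurable_comp_perm τ) (measurable_comp_perm σ), hσ, hτ]
    -- every transposition is good
    have hswap : ∀ a b : Fin (n + 1), a ≠ b → L.map (fun x => x ∘ Equiv.swap a b) = L := by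
      cases n with
      | zero => intro a b hab; exact absurd (Fin.ext (by omega)) hab
      | succ k =>
        have hlift : ∀ a' b' : Fin (k + 1),
            L.map (fun x => x ∘ Equiv.swap (Fin.castSucc a') (Fin.castSucc b')) = L := by
          intro a' b'
          rw [← liftPerm_swap]
          exact polyaLaw_map_liftPerm α G0 (Equiv.swap a' b') (IH (Equiv.swap a' b'))
        have hswap2 : L.map (fun x => x ∘ swap2 k) = L := polyaLaw_map_swap2 α G0 hα
        have hlastswap : ∀ i : Fin (k + 1),
            L.map (fun x => x ∘ Equiv.swap (Fin.castSucc i) (Fin.last (k + 1))) = L := by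
          intro i
          rcases eq_or_ne i (Fin.last k) with rfl | hik
          · exact hswap2
          · have hid : Equiv.swap (Fin.castSucc (Fin.last k)) (Fin.castSucc i)
                * Equiv.swap (Fin.last (k + 1)) (Fin.castSucc (Fin.last k))
                * Equiv.swap (Fin.castSucc (Fin.last k)) (Fin.castSucc i)
                = Equiv.swap (Fin.castSucc i) (Fin.last (k + 1)) :=
              Equiv.swap_mul_swap_mul_swap (Fin.castSucc_lt_last _).ne'
                ((Fin.castSucc_lt_last _).ne')
            rw [← hid]
            have h2 : Equiv.swap (Fin.last (k + 1)) (Fin.castSucc (Fin.last k)) = swap2 k := by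
              rw [Equiv.swap_comm]; rfl
            exact hmul _ _ (hmul _ _ (hlift _ _) (by rw [h2]; exact hswap2)) (hlift _ _)
        intro a b hab
        rcases eq_or_ne b (Fin.last (k + 1)) with rfl | hb
        · obtain ⟨i, rfl⟩ := Fin.exists_castSucc_eq.2 hab
          exact hlastswap i
        · rcases eq_or_ne a (Fin.last (k + 1)) with rfl | ha
          · obtain ⟨i, rfl⟩ := Fin.exists_castSucc_eq.2 hb
            rw [Equiv.swap_comm]
            exact hlastswap i
          · obtain ⟨i, rfl⟩ := Fin.exists_castSucc_eq.2 ha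
            obtain ⟨j, rfl⟩ := Fin.exists_castSucc_eq.2 hb
            exact hlift i j
    -- conclude by generation
    have hπ : π ∈ Submonoid.closure {σ : Equiv.Perm (Fin (n + 1)) | σ.IsSwap} := by
      rw [Equiv.Perm.mclosure_isSwap]; trivial
    refine Submonoid.closure_induction ?_ ?_ ?_ hπ
    · rintro σ ⟨a, b, hab, rfl⟩
      exact hswap a b hab
    · have : (fun x : Fin (n + 1) → ℝ => x ∘ (1 : Equiv.Perm (Fin (n + 1)))) = id :=
        funext fun x => rfl
      rw [this, Measure.map_id]
    · intro σ τ _ _ hσ hτ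
      exact hmul σ τ hσ hτ
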